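/- The function f(a) = ∑_{j≠k}(R_j − a_j) + B·log₂((Q + σ²/h_k)/(∑_{j≠k}(1 − 2^{(a_j−R_j)/B})(Q + σ²/h_j) + σ²/h_k)) is convex in a = (a_1,...,a_K) on the region where the denominator is positive. -/

import Mathlib

open Real Finset

private lemma aux_pos {a b gx gy : ℝ} (ha : 0 ≤ a) (hb : 0 ≤ b) (hab : a + b = 1)
    (hx : 0 < gx) (hy : 0 < gy) : 0 < a * gx + b * gy := by
  rcases eq_or_lt_of_le ha with h | h
  · have hb1 : b = 1 := by linarith
    simp [← h, hb1, hy]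
  · have : 0 < a * gx := mul_pos h hx
    nlinarith [mul_nonneg hb hy.le]

private lemma aux_exp2 {u v a b : ℝ} (ha : 0 ≤ a) (hb : 0 ≤ b) (hab : a + b = 1) :
    (2:ℝ) ^ (a * u + b * v) ≤ a * (2:ℝ) ^ u + b * (2:ℝ) ^ v := by
  rw [Real.rpow_def_of_pos two_pos, Real.rpow_def_of_pos two_pos,
    Real.rpow_def_of_pos two_pos]
  have h := convexOn_exp.2 (Set.mem_univ (Real.log 2 * u)) (Set.mem_univ (Real.log 2 * v))
    ha hb hab
  simp only [smul_eq_mul] at h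
  calc Real.exp (Real.log 2 * (a * u + b * v))
      = Real.exp (a * (Real.log 2 * u) + b * (Real.log 2 * v)) := by ring_nf
    _ ≤ a * Real.exp (Real.log 2 * u) + b * Real.exp (Real.log 2 * v) := h

private lemma convexOn_congr' {E : Type*} [AddCommMonoid E] [Module ℝ E] {s : Set E}
    {f g : E → ℝ} (hf : ConvexOn ℝ s f) (h : ∀ x ∈ s, f x = g x) : ConvexOn ℝ s g := by
  refine ⟨hf.1, fun x hx y hy a b ha hb hab => ?_⟩
  rw [← h x hx, ← h y hy, ← h _ (hf.1 hx hy ha hb hab)]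
  exact hf.2 hx hy ha hb hab

/-- Lemma 4: the rate-allocation objective
`f(a) = ∑_{j≠k}(Rⱼ − aⱼ) + B·log₂((Q+σ²/h_k)/(∑_{j≠k}(1−2^{(aⱼ−Rⱼ)/B})(Q+σ²/hⱼ)+σ²/h_k))`
is convex on the region where the denominator is positive. -/
theorem stmt_10 (K : ℕ) (Q σ2 B : ℝ) (hQ : 0 < Q) (hσ2 : 0 < σ2) (hB : 0 < B)
    (h : Fin K → ℝ) (hpos : ∀ j, 0 < h j) (R : Fin K → ℝ) (k : Fin K) :
    ConvexOn ℝ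
      {a : Fin K → ℝ |
        0 < ∑ j ∈ Finset.univ.erase k,
              (1 - (2:ℝ) ^ ((a j - R j) / B)) * (Q + σ2 / h j) + σ2 / h k}
      (fun a =>
        (∑ j ∈ Finset.univ.erase k, (R j - a j)) +
          B * Real.logb 2 ((Q + σ2 / h k) /
            (∑ j ∈ Finset.univ.erase k,
                (1 - (2:ℝ) ^ ((a j - R j) / B)) * (Q + σ2 / h j) + σ2 / h k))) := by
  set c : Fin K → ℝ := fun j => Q + σ2 / h j with hc_def
  have hc : ∀ j, 0 < c j := fun j => by
    have := div_pos hσ2 (hpos j); simp only [hc_def]; linarith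
  set g : (Fin K → ℝ) → ℝ := fun a =>
    ∑ j ∈ Finset.univ.erase k, (1 - (2:ℝ) ^ ((a j - R j) / B)) * c j + σ2 / h k with hg_def
  have hd : 0 < σ2 / h k := div_pos hσ2 (hpos k)
  clear_value c g
  suffices H : ConvexOn ℝ {a : Fin K → ℝ | 0 < g a}
      (fun a => (∑ j ∈ Finset.univ.erase k, (R j - a j)) + B * Real.logb 2 (c k / g a)) by
    simp only [hg_def, hc_def] at H
    exact H
  -- concavity inequality for g
  have hg_ineq : ∀ (x y : Fin K → ℝ) (a b : ℝ), 0 ≤ a → 0 ≤ b → a + b = 1 →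
      a * g x + b * g y ≤ g (a • x + b • y) := by
    intro x y a b ha hb hab
    have key : ∀ j ∈ Finset.univ.erase k,
        a * ((1 - (2:ℝ) ^ ((x j - R j) / B)) * c j)
          + b * ((1 - (2:ℝ) ^ ((y j - R j) / B)) * c j)
        ≤ (1 - (2:ℝ) ^ (((a • x + b • y) j - R j) / B)) * c j := by
      intro j _
      have hexp : ((a • x + b • y) j - R j) / B
          = a * ((x j - R j) / B) + b * ((y j - R j) / B) := by
        simp only [Pi.add_apply, Pi.smul_apply, smul_eq_mul]
        field_simp
        linear_combination (R j) * hab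
      rw [hexp]
      have h2 := aux_exp2 (u := (x j - R j) / B) (v := (y j - R j) / B) ha hb hab
      have hcj := (hc j).le
      have h3 := mul_le_mul_of_nonneg_right h2 hcj
      have habc : a * c j + b * c j = c j := by linear_combination (c j) * hab
      nlinarith [h3, habc]
    have hsum : a * g x + b * g y
        = (∑ j ∈ Finset.univ.erase k,
            (a * ((1 - (2:ℝ) ^ ((x j - R j) / B)) * c j)
              + b * ((1 - (2:ℝ) ^ ((y j - R j) / B)) * c j))) + σ2 / h k := by
      simp only [hg_def, mul_add, Finset.mul_sum, Finset.sum_add_distrib]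
      linear_combination (σ2 / h k) * hab
    rw [hsum, hg_def]
    exact add_le_add (Finset.sum_le_sum key) le_rfl
  -- the region is convex
  have hconv : Convex ℝ {a : Fin K → ℝ | 0 < g a} := by
    intro x hx y hy a b ha hb hab
    have hx' : 0 < g x := hx
    have hy' : 0 < g y := hy
    have := hg_ineq x y a b ha hb hab
    exact lt_of_lt_of_le (aux_pos ha hb hab hx' hy') this
  -- concavity of log ∘ g on the region
  have hlog : ConcaveOn ℝ {a : Fin K → ℝ | 0 < g a} (fun a => Real.log (g a)) := by
    refine ⟨hconv, fun x hx y hy a b ha hb hab => ?_⟩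
    have hx' : 0 < g x := hx
    have hy' : 0 < g y := hy
    have h1 : a * g x + b * g y ≤ g (a • x + b • y) := hg_ineq x y a b ha hb hab
    have hpos' : 0 < a * g x + b * g y := aux_pos ha hb hab hx' hy'
    have h2 := strictConcaveOn_log_Ioi.concaveOn.2 (Set.mem_Ioi.2 hx') (Set.mem_Ioi.2 hy')
      ha hb hab
    simp only [smul_eq_mul] at h2 ⊢
    calc a * Real.log (g x) + b * Real.log (g y)
        ≤ Real.log (a * g x + b * g y) := h2
      _ ≤ Real.log (g (a • x + b • y)) := Real.log_le_log hpos' h1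
  -- convexity of the affine part
  set C : ℝ := B * Real.log (c k) / Real.log 2 with hC_def
  have hlin : ConvexOn ℝ {a : Fin K → ℝ | 0 < g a}
      (fun a => (∑ j ∈ Finset.univ.erase k, (R j - a j)) + C) := by
    refine ⟨hconv, fun x _ y _ a b ha hb hab => ?_⟩
    have heq : (∑ j ∈ Finset.univ.erase k, (R j - (a • x + b • y) j)) + C
        = a • ((∑ j ∈ Finset.univ.erase k, (R j - x j)) + C)
          + b • ((∑ j ∈ Finset.univ.erase k, (R j - y j)) + C) := by
      simp only [smul_eq_mul, Pi.add_apply, Pi.smul_apply, mul_add, Finset.mul_sum,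
        ← Finset.sum_add_distrib]
      have hterm : ∀ j ∈ Finset.univ.erase k,
          R j - (a * x j + b * y j) = a * (R j - x j) + b * (R j - y j) := by
        intro j _; linear_combination (-(R j)) * hab
      rw [Finset.sum_congr rfl hterm, Finset.sum_add_distrib]
      linear_combination (-C) * hab
    exact le_of_eq heq
  -- assemble: F = affine part − (B / log 2) · log (g a)
  have hBlog : 0 ≤ B / Real.log 2 := by positivity
  have hF : ConvexOn ℝ {a : Fin K → ℝ | 0 < g a}
      (fun a => ((∑ j ∈ Finset.univ.erase k, (R j - a j)) + C)
        + (-((B / Real.log 2) • Real.log (g a)))) :=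
    hlin.add ((hlog.smul hBlog).neg)
  refine convexOn_congr' hF ?_
  intro x hx
  have hx' : 0 < g x := hx
  have hck : 0 < c k := hc k
  have hlog2 : Real.log 2 ≠ 0 := by
    have := Real.log_pos (by norm_num : (1:ℝ) < 2); linarith
  show ((∑ j ∈ Finset.univ.erase k, (R j - x j)) + C)
      + (-((B / Real.log 2) • Real.log (g x)))
    = (∑ j ∈ Finset.univ.erase k, (R j - x j)) + B * Real.logb 2 (c k / g x)
  rw [Real.logb, Real.log_div hck.ne' hx'.ne']
  simp only [smul_eq_mul, hC_def]
  field_simp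
  ring
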